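/- The boundary K-matrix K_L(z|a,b) = 1 + ((z^2-1)/((z-a)(z-b))) M, where M is the 3×3 matrix with rows (-1, 0, -ab), (0, 0, 0), (1, 0, ab) in the basis (v_{-1}, v_0, v_1), satisfies the unitarity condition K_L(z) K_L(z^{-1}) = 1 for all z for which (z-a)(z-b) ≠ 0 and (z^{-1}-a)(z^{-1}-b) ≠ 0. -/

import Mathlib

noncomputable section

/-- The boundary K-matrix
`K_L(z|a,b) = 1 + ((z²-1)/((z-a)(z-b))) M`, with `M` the matrix with rows
`(-1,0,-ab)`, `(0,0,0)`, `(1,0,ab)` in the basis `(v₋₁, v₀, v₁)`. -/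
def KL (a b z : ℂ) : Matrix (Fin 3) (Fin 3) ℂ :=
  1 + ((z ^ 2 - 1) / ((z - a) * (z - b))) •
    !![-1, 0, -(a * b); 0, 0, 0; 1, 0, a * b]

/-- the boundary K-matrix satisfies the unitarity condition
`K_L(z) K_L(z⁻¹) = 1`. -/
theorem statement17 (a b z : ℂ) (ha : a ≠ 0) (hb : b ≠ 0) (hz : z ≠ 0)
    (h1 : (z - a) * (z - b) ≠ 0) (h2 : (z⁻¹ - a) * (z⁻¹ - b) ≠ 0) :
    KL a b z * KL a b z⁻¹ = 1 := by
  set M : Matrix (Fin 3) (Fin 3) ℂ := !![-1, 0, -(a * b); 0, 0, 0; 1, 0, a * b] with hM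
  set c : ℂ := (z ^ 2 - 1) / ((z - a) * (z - b)) with hc
  set d : ℂ := ((z⁻¹) ^ 2 - 1) / ((z⁻¹ - a) * (z⁻¹ - b)) with hd
  have hza : z - a ≠ 0 := fun h => h1 (by rw [h, zero_mul])
  have hzb : z - b ≠ 0 := fun h => h1 (by rw [h, mul_zero])
  have hia : z⁻¹ - a ≠ 0 := fun h => h2 (by rw [h, zero_mul])
  have hib : z⁻¹ - b ≠ 0 := fun h => h2 (by rw [h, mul_zero])
  have hia' : 1 - a * z ≠ 0 := by
    intro h
    apply hia
    have he : z * (z⁻¹ - a) = 1 - a * z := by field_simp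
    have h2' : z * (z⁻¹ - a) = 0 := by rw [he, h]
    rcases mul_eq_zero.1 h2' with h3 | h3
    · exact absurd h3 hz
    · exact h3
  have hib' : 1 - b * z ≠ 0 := by
    intro h
    apply hib
    have he : z * (z⁻¹ - b) = 1 - b * z := by field_simp
    have h2' : z * (z⁻¹ - b) = 0 := by rw [he, h]
    rcases mul_eq_zero.1 h2' with h3 | h3
    · exact absurd h3 hz
    · exact h3
  have hd' : d = (1 - z ^ 2) / ((1 - a * z) * (1 - b * z)) := by
    rw [hd, div_eq_div_iff (mul_ne_zero hia hib) (mul_ne_zero hia' hib')]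
    field_simp
  have hMM : M * M = (a * b - 1) • M := by
    rw [hM]
    ext i j
    fin_cases i <;> fin_cases j <;>
      simp [Matrix.mul_apply, Fin.sum_univ_three, Matrix.vecHead, Matrix.vecTail] <;> ring
  have hscal : c + d + c * d * (a * b - 1) = 0 := by
    rw [hc, hd']
    rw [div_add_div _ _ (mul_ne_zero hza hzb) (mul_ne_zero hia' hib'), div_mul_div_comm,
      div_mul_eq_mul_div, div_add_div _ _ (mul_ne_zero (mul_ne_zero hza hzb) (mul_ne_zero hia' hib'))
      (mul_ne_zero (mul_ne_zero hza hzb) (mul_ne_zero hia' hib')), div_eq_zero_iff]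
    left
    ring
  have hprod : KL a b z * KL a b z⁻¹ = 1 + (c + d + c * d * (a * b - 1)) • M := by
    simp only [KL, ← hM, ← hc, ← hd]
    rw [mul_add, add_mul, add_mul, one_mul, mul_one, one_mul, Matrix.smul_mul,
      Matrix.mul_smul, hMM]
    module
  rw [hprod, hscal, zero_smul, add_zero]
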